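/- Let x = ∑_{i=1}^n ω^{α_i}·a_i and y = ∑_{j=1}^m ω^{β_j}·b_j be nonzero ordinals in Cantor normal form. Then the ordinal product x·y is given by: (1) if β_m > 0 then x·y = ∑_{j=1}^m ω^{α_1+β_j}·b_j; (2) if β_m = 0 and m > 1 then x·y = ∑_{j=1}^{m-1} ω^{α_1+β_j}·b_j + ω^{α_1}·(a_1·b_m) + ∑_{i=2}^n ω^{α_i}·a_i; (3) if β_m = 0 and m = 1 then x·y = ω^{α_1}·(a_1·b_1) + ∑_{i=2}^n ω^{α_i}·a_i. -/

import Mathlib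

open Ordinal

/-- The value of a Cantor normal form expression `∑_{i<n} ω^(α i) · (a i)`,
with the summands added in order of increasing index. -/
noncomputable def CNFsum (n : ℕ) (α : ℕ → Ordinal) (a : ℕ → ℕ) : Ordinal :=
  ((List.range n).map fun i => ω ^ α i * (a i : Ordinal)).sum

lemma CNFsum_succ (k : ℕ) (α : ℕ → Ordinal) (a : ℕ → ℕ) :
    CNFsum (k+1) α a = ω ^ α 0 * (a 0 : Ordinal)
      + CNFsum k (fun i => α (i+1)) (fun i => a (i+1)) := by
  simp [CNFsum, List.range_succ_eq_map, List.map_map, Function.comp_def]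

lemma CNFsum_last (k : ℕ) (α : ℕ → Ordinal) (a : ℕ → ℕ) :
    CNFsum (k+1) α a = CNFsum k α a + ω ^ α k * (a k : Ordinal) := by
  simp [CNFsum, List.range_succ]

lemma CNFsum_lt (k : ℕ) (α : ℕ → Ordinal) (a : ℕ → ℕ) (γ : Ordinal)
    (h : ∀ i, i < k → α i < γ) : CNFsum k α a < ω ^ γ := by
  induction k with
  | zero => simpa [CNFsum] using opow_pos γ omega0_pos
  | succ k ih =>
    rw [CNFsum_last]
    apply principal_add_omega0_opow γ (ih fun i hi => h i (hi.trans k.lt_succ_self))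
    calc ω ^ α k * (a k : Ordinal) < ω ^ α k * ω :=
          mul_lt_mul_of_pos_left (nat_lt_omega0 _) (opow_pos _ omega0_pos)
      _ = ω ^ (α k + 1) := by rw [opow_add, opow_one]
      _ ≤ ω ^ γ := opow_le_opow_right omega0_pos (Order.add_one_le_of_lt (h k k.lt_succ_self))

lemma mul_nat' {γ t : Ordinal} {A : ℕ} (hA : 0 < A) (ht : t < ω ^ γ) :
    ∀ b : ℕ, 0 < b → (ω ^ γ * A + t) * b = ω ^ γ * ((A * b : ℕ) : Ordinal) + t := by
  intro b hb
  induction b with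
  | zero => omega
  | succ b ih =>
    rcases Nat.eq_zero_or_pos b with rfl | hb'
    · simp
    have habs : t + ω ^ γ * (A : Ordinal) = ω ^ γ * (A : Ordinal) :=
      add_absorp ht (le_mul_of_one_le_right (opow_pos _ omega0_pos).le
        (by exact_mod_cast hA))
    push_cast
    push_cast at ih
    rw [mul_add, mul_one, ih hb']
    calc (ω ^ γ * ((A : Ordinal) * b) + t) + (ω ^ γ * A + t)
        = ω ^ γ * ((A : Ordinal) * b) + ((t + ω ^ γ * A) + t) := by
          rw [add_assoc, add_assoc]
      _ = (ω ^ γ * ((A : Ordinal) * b) + ω ^ γ * A) + t := by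
          rw [habs, add_assoc]
      _ = ω ^ γ * ((A : Ordinal) * (b + 1)) + t := by
          rw [← mul_add, mul_add (A : Ordinal), mul_one]

lemma mul_omega_opow' {γ t : Ordinal} {A : ℕ} (hA : 0 < A) (ht : t < ω ^ γ)
    {β : Ordinal} (hβ : 0 < β) : (ω ^ γ * A + t) * ω ^ β = ω ^ (γ + β) := by
  obtain ⟨δ, rfl⟩ : ∃ δ, β = 1 + δ :=
    ⟨β - 1, (Ordinal.add_sub_cancel_of_le (Order.one_le_iff_pos.2 hβ)).symm⟩
  have hxω : (ω ^ γ * A + t) * ω = ω ^ γ * ω := by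
    apply le_antisymm
    · calc (ω ^ γ * A + t) * ω ≤ (ω ^ γ * ((A : Ordinal) + 1)) * ω := by
            apply mul_le_mul_left
            rw [mul_add_one]
            exact add_le_add_right ht.le _
        _ = ω ^ γ * (((A : Ordinal) + 1) * ω) := by rw [mul_assoc]
        _ = ω ^ γ * ω := by
            rw [mul_omega0 (by exact_mod_cast Nat.succ_pos A) (by
              exact_mod_cast nat_lt_omega0 (A + 1))]
    · apply mul_le_mul_left
      exact le_trans (le_mul_of_one_le_right (opow_pos _ omega0_pos).le
        (by exact_mod_cast hA)) (le_self_add)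
  calc (ω ^ γ * A + t) * ω ^ (1 + δ)
      = ((ω ^ γ * A + t) * ω) * ω ^ δ := by rw [opow_add, opow_one, mul_assoc]
    _ = (ω ^ γ * ω) * ω ^ δ := by rw [hxω]
    _ = ω ^ (γ + (1 + δ)) := by rw [← add_assoc, opow_add, opow_add, opow_one]

lemma mul_CNFsum_pos {γ t : Ordinal} {A : ℕ} (hA : 0 < A) (ht : t < ω ^ γ) :
    ∀ (k : ℕ) (β : ℕ → Ordinal) (b : ℕ → ℕ), (∀ j, j < k → 0 < β j) →
      (ω ^ γ * A + t) * CNFsum k β b = CNFsum k (fun j => γ + β j) b := by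
  intro k
  induction k with
  | zero => intro β b _; simp [CNFsum]
  | succ k ih =>
    intro β b hpos
    rw [CNFsum_succ, CNFsum_succ, mul_add, ← mul_assoc,
      mul_omega_opow' hA ht (hpos 0 k.succ_pos),
      ih (fun i => β (i + 1)) (fun i => b (i + 1))
        (fun j hj => hpos (j + 1) (by omega))]

/-- Multiplication of two nonzero ordinals given in Cantor normal form, by cases on whether the
last exponent `β (m-1)` of `y` is zero. -/
theorem cnf_mul (n m : ℕ) (hn : 1 ≤ n) (hm : 1 ≤ m)
    (α β : ℕ → Ordinal) (a b : ℕ → ℕ)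
    (hα : ∀ i j, i < j → j < n → α j < α i)
    (hβ : ∀ i j, i < j → j < m → β j < β i)
    (ha : ∀ i, i < n → 0 < a i) (hb : ∀ j, j < m → 0 < b j) :
    -- (1)
    (0 < β (m - 1) →
      CNFsum n α a * CNFsum m β b = CNFsum m (fun j => α 0 + β j) b) ∧
    -- (2)
    (β (m - 1) = 0 → 1 < m →
      CNFsum n α a * CNFsum m β b =
        CNFsum (m - 1) (fun j => α 0 + β j) b +
          (ω ^ α 0 * ((a 0 * b (m - 1) : ℕ) : Ordinal) +
            CNFsum (n - 1) (fun i => α (i + 1)) (fun i => a (i + 1)))) ∧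
    -- (3)
    (β (m - 1) = 0 → m = 1 →
      CNFsum n α a * CNFsum m β b =
        ω ^ α 0 * ((a 0 * b 0 : ℕ) : Ordinal) +
          CNFsum (n - 1) (fun i => α (i + 1)) (fun i => a (i + 1))) := by
  obtain ⟨n, rfl⟩ : ∃ n', n = n' + 1 := ⟨n - 1, (Nat.succ_pred_eq_of_pos hn).symm⟩
  obtain ⟨m, rfl⟩ : ∃ m', m = m' + 1 := ⟨m - 1, (Nat.succ_pred_eq_of_pos hm).symm⟩
  simp only [Nat.add_sub_cancel]
  set t : Ordinal := CNFsum n (fun i => α (i + 1)) (fun i => a (i + 1)) with hts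
  have ht : t < ω ^ α 0 :=
    CNFsum_lt _ _ _ _ (fun i hi => hα 0 (i + 1) (Nat.succ_pos i) (by omega))
  have hA : 0 < a 0 := ha 0 (Nat.succ_pos n)
  have hx : CNFsum (n + 1) α a = ω ^ α 0 * (a 0 : Ordinal) + t := CNFsum_succ n α a
  refine ⟨?_, ?_, ?_⟩
  · intro h1
    have hpos : ∀ j, j < m + 1 → 0 < β j := by
      intro j hj
      rcases eq_or_lt_of_le (Nat.lt_succ_iff.1 hj) with rfl | hj'
      · exact h1
      · exact h1.trans (hβ j m hj' (Nat.lt_succ_self m))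
    rw [hx, mul_CNFsum_pos hA ht _ β b hpos]
  · intro h0 h1m
    have hm' : 1 ≤ m := by omega
    have hpos : ∀ j, j < m → 0 < β j := by
      intro j hj
      have := hβ j m hj (Nat.lt_succ_self m)
      rw [h0] at this
      exact this
    rw [CNFsum_last m β b, h0, opow_zero, one_mul, hx, mul_add,
      mul_CNFsum_pos hA ht m β b hpos, mul_nat' hA ht (b m) (hb m (Nat.lt_succ_self m))]
  · intro h0 h1
    have hm0 : m = 0 := by omega
    subst hm0
    have hy : CNFsum 1 β b = (b 0 : Ordinal) := by simp [CNFsum, List.range_succ, h0]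
    rw [hy, hx, mul_nat' hA ht (b 0) (hb 0 Nat.one_pos)]
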